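/- Let A be a unital C*-algebra and a, b, c, d ∈ A. The matrix [[a, b], [c, d]] is a positive element of Mat₂(A) if and only if a ≥ 0, d ≥ 0, c = b*, and for every real ε > 0 one has a ≥ b (d + ε·1)⁻¹ b* (here d + ε·1 is invertible since d ≥ 0 and ε > 0). -/

import Mathlib

open Matrix

/-- An element of `Mat₂(A)` is positive (as an element of the C*-algebra `Mat₂(A)`)
iff it is of the form `Nᴴ * N`. -/
def Mat2IsPositive {A : Type*} [Ring A] [StarRing A]
    (M : Matrix (Fin 2) (Fin 2) A) : Prop :=
  ∃ N : Matrix (Fin 2) (Fin 2) A, M = Nᴴ * N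

section Aux

open Matrix WithCStarModule CStarModule
open scoped InnerProductSpace

set_option synthInstance.maxHeartbeats 800000
set_option maxHeartbeats 1600000
noncomputable section

set_option linter.unusedSectionVars false
variable {A : Type*} [CStarAlgebra A] [PartialOrder A] [StarOrderedRing A]

/-- Type synonym for 2×2 matrices over `A`, to carry the C*-algebra structure. -/
def M2 (A : Type*) : Type _ := CStarMatrix (Fin 2) (Fin 2) A

instance M2.instCStarAlgebra : CStarAlgebra (M2 A) :=
  inferInstanceAs (CStarAlgebra (CStarMatrix (Fin 2) (Fin 2) A))

section Alg

variable {A : Type*} [CStarAlgebra A] [PartialOrder A] [StarOrderedRing A]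

lemma ofReal_smul_one_nonneg {r : ℝ} (hr : 0 ≤ r) : 0 ≤ (r : ℂ) • (1 : A) := by
  have h := star_mul_self_nonneg ((Real.sqrt r : ℂ) • (1 : A))
  have heq : star ((Real.sqrt r : ℂ) • (1 : A)) * ((Real.sqrt r : ℂ) • (1 : A))
      = (r : ℂ) • (1 : A) := by
    rw [star_smul, star_one, smul_mul_smul_comm, one_mul, RCLike.star_def,
      Complex.conj_ofReal, ← Complex.ofReal_mul, Real.mul_self_sqrt hr]
  rwa [heq] at h

lemma isUnit_add_smul_one {d : A} (hd : 0 ≤ d) {ε : ℝ} (hε : 0 < ε) :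
    IsUnit (d + (ε : ℂ) • 1) := by
  refine CStarAlgebra.isUnit_of_le ((ε : ℂ) • (1 : A)) (le_add_of_nonneg_left hd)
    (IsUnit.isStrictlyPositive ?_ (ofReal_smul_one_nonneg hε.le))
  have h : (ε : ℂ) • (1 : A) = algebraMap ℂ A ε := (Algebra.algebraMap_eq_smul_one _).symm
  rw [h]
  exact (isUnit_iff_ne_zero.mpr (by exact_mod_cast hε.ne')).map (algebraMap ℂ A)

lemma star_inverse_self {x : A} (hx : star x = x) :
    star (Ring.inverse x) = Ring.inverse x := by
  rw [← Ring.inverse_star, hx]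

lemma inverse_nonneg_of_nonneg {x : A} (hx : 0 ≤ x) (hu : IsUnit x) :
    0 ≤ Ring.inverse x := by
  set e := Ring.inverse x with he
  have h1 : e * x = 1 := Ring.inverse_mul_cancel _ hu
  have hesa : star e = e := star_inverse_self (IsSelfAdjoint.of_nonneg hx).star_eq
  have h2 : e = star e * x * e := by
    rw [hesa, mul_assoc]
    rw [show x * e = 1 from Ring.mul_inverse_cancel _ hu, mul_one]
  rw [h2]
  exact star_left_conjugate_nonneg hx e

end Alg

section Forward

variable {A : Type*} [CStarAlgebra A] [PartialOrder A] [StarOrderedRing A]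

lemma schur_le_of_eq_sq {a b c d : A} {N : Matrix (Fin 2) (Fin 2) A}
    (hM : !![a, b; c, d] = Nᴴ * N) {ε : ℝ} (hε : 0 < ε) (hd : 0 ≤ d) :
    b * Ring.inverse (d + (ε : ℂ) • 1) * star b ≤ a := by
  have h00 := congr_fun (congr_fun hM 0) 0
  have h01 := congr_fun (congr_fun hM 0) 1
  have h11 := congr_fun (congr_fun hM 1) 1
  simp only [Matrix.mul_apply, Fin.sum_univ_two, Matrix.conjTranspose_apply,
    Matrix.of_apply, Matrix.cons_val', Matrix.cons_val_zero, Matrix.cons_val_one,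
    Matrix.head_cons, Matrix.empty_val', Matrix.cons_val_fin_one,
    Matrix.head_fin_const] at h00 h01 h11
  set x := d + (ε : ℂ) • 1 with hxdef
  have hxnn : 0 ≤ x := add_nonneg hd (ofReal_smul_one_nonneg hε.le)
  have hu : IsUnit x := isUnit_add_smul_one hd hε
  set e := Ring.inverse x with hedef
  have hex : e * x = 1 := Ring.inverse_mul_cancel _ hu
  have hxe : x * e = 1 := Ring.mul_inverse_cancel _ hu
  have hesa : star e = e := star_inverse_self (IsSelfAdjoint.of_nonneg hxnn).star_eq
  set u := -(e * star b) with hudef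
  have husa : star u = -(b * e) := by
    rw [hudef, star_neg, StarMul.star_mul, star_star, hesa]
  set v₀ := N 0 0 + N 0 1 * u with hv0
  set v₁ := N 1 0 + N 1 1 * u with hv1
  have hs : star v₀ * v₀ + star v₁ * v₁
      = a + b * u + star u * star b + star u * (d * u) := by
    rw [h00, h01, h11, hv0, hv1]
    simp only [star_add, StarMul.star_mul, star_star]
    noncomm_ring
  have hede : e * (d * e) = e - (ε : ℂ) • (e * e) := by
    have hd' : d = x - (ε : ℂ) • 1 := by rw [hxdef]; abel
    rw [hd', sub_mul, mul_sub, ← mul_assoc, hex, one_mul, smul_mul_assoc, one_mul,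
      mul_smul_comm]
  have key : a - b * e * star b
      = (star v₀ * v₀ + star v₁ * v₁)
        + star (((Real.sqrt ε : ℂ) • e) * star b) * (((Real.sqrt ε : ℂ) • e) * star b) := by
    have hz : star (((Real.sqrt ε : ℂ) • e) * star b) * (((Real.sqrt ε : ℂ) • e) * star b)
        = (ε : ℂ) • (b * (e * (e * star b))) := by
      rw [StarMul.star_mul, star_star, star_smul, RCLike.star_def, Complex.conj_ofReal, hesa]
      simp only [smul_mul_assoc, mul_smul_comm, smul_smul]
      rw [← Complex.ofReal_mul, Real.mul_self_sqrt hε.le]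
      congr 1
      noncomm_ring
    rw [hz, hs, husa, hudef]
    have expand : b * -(e * star b) = -(b * e * star b) := by noncomm_ring
    rw [expand]
    have expand2 : -(b * e) * star b = -(b * e * star b) := by noncomm_ring
    rw [expand2]
    have expand3 : -(b * e) * (d * -(e * star b)) = b * (e * (d * e)) * star b := by
      noncomm_ring
    rw [expand3, hede]
    rw [mul_sub, sub_mul]
    have e4 : b * ((ε : ℂ) • (e * e)) * star b = (ε : ℂ) • (b * (e * (e * star b))) := by
      rw [mul_smul_comm, smul_mul_assoc]
      congr 1
      noncomm_ring
    rw [e4]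
    have e5 : b * e * star b = b * e * star b := rfl
    noncomm_ring
  have : 0 ≤ a - b * e * star b := by
    rw [key]
    exact add_nonneg (add_nonneg (star_mul_self_nonneg _) (star_mul_self_nonneg _))
      (star_mul_self_nonneg _)
  exact sub_nonneg.mp this
end Forward

section Decomp

variable {A : Type*} [CStarAlgebra A] [PartialOrder A] [StarOrderedRing A]

lemma decomp (a b d : A) (hd : 0 ≤ d) {ε : ℝ} (hε : 0 < ε)
    (hba : b * Ring.inverse (d + (ε : ℂ) • 1) * star b ≤ a) :
    ∃ R S : Matrix (Fin 2) (Fin 2) A,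
      !![a, b; star b, d] + (ε : ℂ) • !![0, 0; 0, 1] = Rᴴ * R + Sᴴ * S := by
  set x := d + (ε : ℂ) • 1 with hxdef
  have hxnn : 0 ≤ x := add_nonneg hd (ofReal_smul_one_nonneg hε.le)
  have hu : IsUnit x := isUnit_add_smul_one hd hε
  set e := Ring.inverse x with hedef
  have hex : e * x = 1 := Ring.inverse_mul_cancel _ hu
  have hxe : x * e = 1 := Ring.mul_inverse_cancel _ hu
  set f := CFC.sqrt x with hfdef
  have hfnn : 0 ≤ f := CFC.sqrt_nonneg (a := x)
  have hff : f * f = x := CFC.sqrt_mul_sqrt_self x hxnn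
  have hfsa : star f = f := (IsSelfAdjoint.of_nonneg hfnn).star_eq
  have hf_unit : IsUnit f := by
    have h1 : f * (f * e) = 1 := by rw [← mul_assoc, hff, hxe]
    have hcomm : e * f = f * e := by
      calc e * f = (e * f) * (f * (f * e)) := by rw [h1, mul_one]
        _ = (e * (f * f)) * (f * e) := by noncomm_ring
        _ = f * e := by rw [hff, hex, one_mul]
    have h2 : (f * e) * f = 1 := by rw [← hcomm, mul_assoc, hff, hex]
    exact ⟨⟨f, f * e, h1, h2⟩, rfl⟩
  set g := Ring.inverse f with hgdef
  have hgf : g * f = 1 := Ring.inverse_mul_cancel _ hf_unit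
  have hfg : f * g = 1 := Ring.mul_inverse_cancel _ hf_unit
  have hgsa : star g = g := star_inverse_self hfsa
  have hgg : g * g = e := by
    have h1 : (g * g) * (f * f) = 1 := by
      rw [show (g * g) * (f * f) = g * ((g * f) * f) from by noncomm_ring, hgf, one_mul, hgf]
    calc g * g = (g * g) * (x * e) := by rw [hxe, mul_one]
      _ = ((g * g) * (f * f)) * e := by rw [hff]; noncomm_ring
      _ = e := by rw [h1, one_mul]
  set r := CFC.sqrt (a - b * e * star b) with hrdef
  have hrnn : 0 ≤ r := CFC.sqrt_nonneg (a := a - b * e * star b)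
  have hrr : r * r = a - b * e * star b := CFC.sqrt_mul_sqrt_self _ (sub_nonneg.mpr hba)
  have hrsa : star r = r := (IsSelfAdjoint.of_nonneg hrnn).star_eq
  refine ⟨!![r, 0; 0, 0], !![0, 0; g * star b, f], ?_⟩
  ext i j
  fin_cases i <;> fin_cases j <;>
    simp only [Fin.mk_zero, Fin.mk_one, Fin.isValue, Matrix.add_apply, Matrix.smul_apply,
      Matrix.mul_apply, Fin.sum_univ_two,
      Matrix.conjTranspose_apply, Matrix.of_apply, Matrix.cons_val', Matrix.cons_val_zero,
      Matrix.cons_val_one, Matrix.head_cons, Matrix.empty_val', Matrix.cons_val_fin_one,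
      Matrix.head_fin_const, star_zero, zero_mul, mul_zero, add_zero, zero_add, smul_zero,
      StarMul.star_mul, star_star, hgsa, hfsa, hrsa]
  · -- (0,0): a + ε • 0 = r * r + (b * g) * (g * star b)
    rw [hrr]
    rw [show (b * g) * (g * star b) = b * (g * g) * star b from by noncomm_ring, hgg]
    abel
  · -- (0,1): b = (b * g) * f
    rw [show (b * g) * f = b * (g * f) from by noncomm_ring, hgf, mul_one]
  · -- (1,0): star b = f * (g * star b)
    rw [show f * (g * star b) = (f * g) * star b from by noncomm_ring, hfg, one_mul]
  · -- (1,1): d + ε • 1 = f * f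
    rw [hff]

end Decomp

section Conv

variable {A : Type*} [CStarAlgebra A] [PartialOrder A] [StarOrderedRing A]

lemma exists_conjTranspose_mul_self [Nontrivial A] (a b d : A) (ha : 0 ≤ a) (hd : 0 ≤ d)
    (hba : ∀ ε : ℝ, 0 < ε → b * Ring.inverse (d + (ε : ℂ) • 1) * star b ≤ a) :
    ∃ N : Matrix (Fin 2) (Fin 2) A, !![a, b; star b, d] = Nᴴ * N := by
  letI : PartialOrder (M2 A) := CStarAlgebra.spectralOrder (M2 A)
  haveI : StarOrderedRing (M2 A) := CStarAlgebra.spectralOrderedRing (M2 A)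
  set M : M2 A := (!![a, b; star b, d] : Matrix (Fin 2) (Fin 2) A) with hMdef
  set Eb : M2 A := (!![0, 0; 0, (1 : A)] : Matrix (Fin 2) (Fin 2) A) with hEbdef
  have hnn : ∀ ε : ℝ, 0 < ε → 0 ≤ M + (ε : ℂ) • Eb := by
    intro ε hε
    obtain ⟨R, S, hRS⟩ := decomp a b d hd hε (hba ε hε)
    have hRS' : !![a, b; star b, d] + (ε : ℂ) • !![0, 0; 0, 1]
        = star R * R + star S * S := by
      rw [Matrix.star_eq_conjTranspose, Matrix.star_eq_conjTranspose]
      exact hRS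
    have hkey : M + (ε : ℂ) • Eb
        = star (R : M2 A) * (R : M2 A) + star (S : M2 A) * (S : M2 A) := hRS'
    rw [hkey]
    exact add_nonneg (star_mul_self_nonneg _) (star_mul_self_nonneg _)
  have htend : Filter.Tendsto (fun n : ℕ => M + ((1 / ((n : ℝ) + 1) : ℝ) : ℂ) • Eb)
      Filter.atTop (nhds M) := by
    have h1 : Filter.Tendsto (fun n : ℕ => (((1 / ((n : ℝ) + 1) : ℝ)) : ℂ))
        Filter.atTop (nhds ((0 : ℝ) : ℂ)) :=
      (Complex.continuous_ofReal.tendsto (0 : ℝ)).comp tendsto_one_div_add_atTop_nhds_zero_nat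
    have h2 := (h1.smul_const Eb).const_add M
    simpa using h2
  have hM : 0 ≤ M := by
    refine CStarAlgebra.isClosed_nonneg.mem_of_tendsto htend ?_
    exact Filter.Eventually.of_forall fun n => hnn _ (by positivity)
  have h1 : M = star (CFC.sqrt M) * CFC.sqrt M := by
    rw [(IsSelfAdjoint.of_nonneg (CFC.sqrt_nonneg (a := M))).star_eq,
      CFC.sqrt_mul_sqrt_self M hM]
  let N : Matrix (Fin 2) (Fin 2) A := (CFC.sqrt M : M2 A)
  refine ⟨N, ?_⟩
  rw [← Matrix.star_eq_conjTranspose]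
  exact h1

end Conv

end

end Aux

theorem stmt_2 {A : Type*} [CStarAlgebra A] [PartialOrder A] [StarOrderedRing A]
    (a b c d : A) :
    Mat2IsPositive !![a, b; c, d] ↔
      0 ≤ a ∧ 0 ≤ d ∧ c = star b ∧
        ∀ ε : ℝ, 0 < ε → b * Ring.inverse (d + (ε : ℂ) • 1) * star b ≤ a := by
  constructor
  · rintro ⟨N, hM⟩
    have h00 := congr_fun (congr_fun hM 0) 0
    have h01 := congr_fun (congr_fun hM 0) 1
    have h10 := congr_fun (congr_fun hM 1) 0
    have h11 := congr_fun (congr_fun hM 1) 1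
    simp only [Matrix.mul_apply, Fin.sum_univ_two, Matrix.conjTranspose_apply,
      Matrix.of_apply, Matrix.cons_val', Matrix.cons_val_zero, Matrix.cons_val_one,
      Matrix.head_cons, Matrix.empty_val', Matrix.cons_val_fin_one,
      Matrix.head_fin_const] at h00 h01 h10 h11
    have ha : 0 ≤ a := by
      rw [h00]; exact add_nonneg (star_mul_self_nonneg _) (star_mul_self_nonneg _)
    have hd : 0 ≤ d := by
      rw [h11]; exact add_nonneg (star_mul_self_nonneg _) (star_mul_self_nonneg _)
    have hc : c = star b := by
      rw [h10, h01]
      simp [star_add, StarMul.star_mul, star_star]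
    exact ⟨ha, hd, hc, fun ε hε => schur_le_of_eq_sq hM hε hd⟩
  · rintro ⟨ha, hd, hc, hba⟩
    rcases subsingleton_or_nontrivial A with hA | hA
    · exact ⟨0, by ext i j; exact Subsingleton.elim _ _⟩
    · subst hc
      exact exists_conjTranspose_mul_self a b d ha hd hba
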